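/- Let k be a field and f ∈ k[x_1,…,x_n] a polynomial having residual normal crossings with respect to the ordered variables x_1,…,x_n. Then the monomial x_1·x_2⋯x_n occurs in f with nonzero coefficient, and every multi-exponent γ in the support of f satisfies γ ≥ (1,1,…,1) in the lexicographic order on ℕ^n in which the coordinate corresponding to x_1 is compared first (i.e. the ordering of monomials with x_n < x_{n-1} < ⋯ < x_1); in other words, the minimal term of f in this lexicographic order is precisely x_1⋯x_n. -/

import Mathlib

open MvPolynomial

/-- Residual normal crossings of a polynomial with respect to an ordered list of
variables: `f` has residual normal crossings w.r.t. the empty list if `f ≠ 0`, and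
w.r.t. `z :: zs` if `z` divides `f` and the polynomial obtained from `f / z` by
substituting `z = 0` has residual normal crossings w.r.t. `zs`. -/
def ResidualNormalCrossings {k : Type*} [Field k] {σ : Type*} [DecidableEq σ] :
    List σ → MvPolynomial σ k → Prop
  | [], f => f ≠ 0
  | z :: zs, f => ∃ g : MvPolynomial σ k, f = X z * g ∧
      ResidualNormalCrossings zs
        (aeval (fun w : σ => if w = z then (0 : MvPolynomial σ k) else X w) g)

namespace RNCAux

/-- Indicator finsupp of a list of variables. -/
noncomputable def D {σ : Type*} : List σ → (σ →₀ ℕ)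
  | [] => 0
  | z :: zs => Finsupp.single z 1 + D zs

lemma D_nil {σ : Type*} : D ([] : List σ) = 0 := rfl

lemma D_cons {σ : Type*} (z : σ) (zs : List σ) :
    D (z :: zs) = Finsupp.single z 1 + D zs := rfl

lemma D_apply_not_mem {σ : Type*} {L : List σ} {w : σ} (h : w ∉ L) : D L w = 0 := by
  classical
  induction L with
  | nil => rfl
  | cons z zs ih =>
    rw [D_cons, Finsupp.add_apply, Finsupp.single_apply, if_neg (by rintro rfl; exact h (List.mem_cons_self)),
      ih (fun hw => h (List.mem_cons_of_mem _ hw)), add_zero]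

lemma D_apply_mem {σ : Type*} {L : List σ} (hL : L.Nodup) {w : σ} (h : w ∈ L) : D L w = 1 := by
  classical
  induction L with
  | nil => exact absurd h List.not_mem_nil
  | cons z zs ih =>
    rw [D_cons, Finsupp.add_apply]
    rcases List.mem_cons.mp h with rfl | hw
    · rw [Finsupp.single_apply, if_pos rfl,
        D_apply_not_mem (List.nodup_cons.mp hL).1, add_zero]
    · rw [Finsupp.single_apply, if_neg, ih (List.nodup_cons.mp hL).2 hw, zero_add]
      rintro rfl
      exact (List.nodup_cons.mp hL).1 hw

lemma coeff_subst {k : Type*} [Field k] {σ : Type*} [DecidableEq σ]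
    (z : σ) (g : MvPolynomial σ k) (δ : σ →₀ ℕ) :
    coeff δ (aeval (fun w : σ => if w = z then (0 : MvPolynomial σ k) else X w) g)
      = if δ z = 0 then coeff δ g else 0 := by
  induction g using MvPolynomial.induction_on' with
  | monomial u a =>
    rw [aeval_monomial]
    by_cases hu : u z = 0
    · have hprod : (u.prod fun w e => (if w = z then (0 : MvPolynomial σ k) else X w) ^ e)
          = u.prod fun w e => (X w : MvPolynomial σ k) ^ e := by
        apply Finsupp.prod_congr
        intro w hw
        rw [if_neg]
        rintro rfl
        exact (Finsupp.mem_support_iff.mp hw) hu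
      rw [hprod, algebraMap_eq, ← monomial_eq]
      by_cases hδ : δ z = 0
      · rw [if_pos hδ]
      · rw [if_neg hδ, coeff_monomial, if_neg]
        rintro rfl
        exact hδ hu
    · have hprod : (u.prod fun w e => (if w = z then (0 : MvPolynomial σ k) else X w) ^ e)
          = 0 := by
        apply Finset.prod_eq_zero (Finsupp.mem_support_iff.mpr hu)
        show (if z = z then (0 : MvPolynomial σ k) else X z) ^ u z = 0
        rw [if_pos rfl, zero_pow hu]
      rw [hprod, mul_zero, coeff_zero]
      by_cases hδ : δ z = 0
      · rw [if_pos hδ, coeff_monomial, if_neg]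
        rintro rfl
        exact hu hδ
      · rw [if_neg hδ]
  | add p q hp hq =>
    rw [map_add, coeff_add, hp, hq, coeff_add]
    split_ifs <;> simp

theorem gen {k : Type*} [Field k] {σ : Type*} [LinearOrder σ] [DecidableEq σ]
    (L : List σ) (hL : L.Pairwise (· < ·)) (f : MvPolynomial σ k)
    (hf : ResidualNormalCrossings L f)
    (hv : ∀ γ ∈ f.support, ∀ w : σ, γ w ≠ 0 → w ∈ L) :
    coeff (D L) f ≠ 0 ∧ ∀ γ ∈ f.support, toLex (D L) ≤ toLex γ := by
  induction L generalizing f with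
  | nil =>
    have hf0 : f ≠ 0 := hf
    have hsupp : ∀ γ ∈ f.support, γ = 0 := by
      intro γ hγ
      ext w
      by_contra hw
      exact absurd (hv γ hγ w hw) List.not_mem_nil
    constructor
    · intro h0
      apply hf0
      ext γ
      rw [coeff_zero]
      by_contra hc
      have h := hsupp γ (mem_support_iff.mpr hc)
      subst h
      exact hc h0
    · intro γ hγ
      rw [hsupp γ hγ, D_nil]
  | cons z zs ih =>
    obtain ⟨g, rfl, hg⟩ := hf
    have hlt : ∀ w ∈ zs, z < w := (List.pairwise_cons.mp hL).1
    have hzs : zs.Pairwise (· < ·) := (List.pairwise_cons.mp hL).2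
    have hz_not : z ∉ zs := fun h => lt_irrefl z (hlt z h)
    have hsup : ∀ γ ∈ (X z * g : MvPolynomial σ k).support,
        ∃ δ ∈ g.support, γ = Finsupp.single z 1 + δ := by
      intro γ hγ
      rw [support_X_mul] at hγ
      obtain ⟨δ, hδ, rfl⟩ := Finset.mem_map.mp hγ
      exact ⟨δ, hδ, rfl⟩
    have hvg : ∀ δ ∈ g.support, ∀ w, w ≠ z → δ w ≠ 0 → w ∈ zs := by
      intro δ hδ w hwz hw
      have hγ : (Finsupp.single z 1 + δ) ∈ (X z * g : MvPolynomial σ k).support := by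
        rw [mem_support_iff, coeff_X_mul]
        exact mem_support_iff.mp hδ
      have hmem := hv _ hγ w (by
        rw [Finsupp.add_apply, Finsupp.single_apply, if_neg (fun h => hwz h.symm), zero_add]
        exact hw)
      rcases List.mem_cons.mp hmem with h | h
      · exact absurd h hwz
      · exact h
    have hg₀ : ∀ δ : σ →₀ ℕ,
        coeff δ (aeval (fun w : σ => if w = z then (0 : MvPolynomial σ k) else X w) g)
          = if δ z = 0 then coeff δ g else 0 := coeff_subst z g
    have hmem : ∀ δ ∈ (aeval (fun w : σ => if w = z then (0 : MvPolynomial σ k) else X w)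
        g).support, δ z = 0 ∧ δ ∈ g.support := by
      intro δ hδ
      rw [mem_support_iff, hg₀] at hδ
      by_cases h : δ z = 0
      · rw [if_pos h] at hδ
        exact ⟨h, mem_support_iff.mpr hδ⟩
      · rw [if_neg h] at hδ
        exact absurd rfl hδ
    have IH := ih hzs _ hg (fun δ hδ w hw =>
      hvg δ (hmem δ hδ).2 w (fun hwz => hw (hwz ▸ (hmem δ hδ).1)) hw)
    have hDz : D zs z = 0 := D_apply_not_mem hz_not
    constructor
    · have h1 : coeff (D zs)
          (aeval (fun w : σ => if w = z then (0 : MvPolynomial σ k) else X w) g)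
            = coeff (D zs) g := by rw [hg₀, if_pos hDz]
      have h2 := IH.1
      rw [h1] at h2
      rw [D_cons]
      rw [coeff_X_mul]
      exact h2
    · intro γ hγ
      obtain ⟨δ, hδ, rfl⟩ := hsup γ hγ
      have key : toLex (D zs) ≤ toLex δ := by
        by_cases h : δ z = 0
        · exact IH.2 δ (mem_support_iff.mpr
            (by rw [hg₀, if_pos h]; exact mem_support_iff.mp hδ))
        · apply le_of_lt
          rw [Finsupp.Lex.lt_iff]
          refine ⟨z, ?_, ?_⟩
          · intro j hj
            have h1 : D zs j = 0 :=
              D_apply_not_mem (fun hm => absurd (hlt j hm) (not_lt.mpr hj.le))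
            have h2 : δ j = 0 := by
              by_contra hc
              exact absurd (hlt j (hvg δ hδ j (ne_of_lt hj) hc)) (not_lt.mpr hj.le)
            show D zs j = δ j
            rw [h1, h2]
          · show D zs z < δ z
            rw [hDz]
            exact Nat.pos_of_ne_zero h
      rw [D_cons]
      have h3 : toLex (Finsupp.single z 1) + toLex (D zs)
          ≤ toLex (Finsupp.single z 1) + toLex δ := add_le_add_right key _
      exact h3

end RNCAux

/-- If `f ∈ k[x₁,…,xₙ]` has residual normal crossings with respect to the ordered
variables `x₁,…,xₙ`, then the monomial `x₁⋯xₙ` occurs in `f` with nonzero coefficient,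
and every exponent `γ` in the support of `f` satisfies `(1,…,1) ≤ γ` in the
lexicographic order comparing the exponent of `x₁` first: the minimal term of `f`
in this order is precisely `x₁⋯xₙ`. -/
theorem residual_normal_crossings_minimal_term
    {k : Type*} [Field k] {n : ℕ} (f : MvPolynomial (Fin n) k)
    (hf : ResidualNormalCrossings (List.finRange n) f) :
    MvPolynomial.coeff (Finsupp.equivFunOnFinite.symm fun _ : Fin n => 1) f ≠ 0 ∧
    ∀ γ ∈ f.support,
      toLex (Finsupp.equivFunOnFinite.symm fun _ : Fin n => (1 : ℕ)) ≤ toLex γ := by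
  have hD : RNCAux.D (List.finRange n)
      = (Finsupp.equivFunOnFinite.symm fun _ : Fin n => (1 : ℕ)) := by
    ext i
    rw [RNCAux.D_apply_mem (List.nodup_finRange n) (List.mem_finRange i)]
    simp
  have h := RNCAux.gen (List.finRange n) (List.pairwise_lt_finRange n) f hf
    (fun γ _ w _ => List.mem_finRange w)
  rw [hD] at h
  exact h
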